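/- Eavesdropper cross-correlation under random phase shifts (the identity η_{aebe} = ρ_ab √κ₁ √κ₂ κ_e · tr(R∘R)). Let N ≥ 1, let R : Matrix (Fin N) (Fin N) ℂ be positive semidefinite (Hermitian, so its diagonal entries are real), let κ₁, κ₂, κ_e ≥ 0 and ρ ∈ ℝ. On a probability space (Ω, μ), let g₁, g₂ : Ω → (Fin N → ℂ) be random vectors with square-integrable zero-mean entries satisfying E[g₁ n · conj(g₂ m)] = ρ if n = m and 0 otherwise; define h₁(ω) = √κ₁ • (R^{1/2}.mulVec (g₁ ω)) and h₂(ω) = √κ₂ • (R^{1/2}.mulVec (g₂ ω)). Let h_e : Ω → (Fin N → ℂ) be a random vector with square-integrable zero-mean entries and E[h_e n · conj(h_e m)] = κ_e · R n m. Let φ_n : Ω → ℝ, n ∈ Fin N, be real random variables, each uniform on (−π, π), and let Φ(ω) be the diagonal matrix with diagonal entries exp(I·φ_n(ω)). Assume the pair (g₁, g₂), the vector h_e, and the phases φ_n are all mutually independent. Then E[(star (h_e) ⬝ᵥ (Φ.mulVec h₁)) · conj(star (h_e) ⬝ᵥ (Φ.mulVec h₂))] = ρ · √κ₁ · √κ₂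 · κ_e · Σ_{n ∈ Fin N} (R n n)², where Σ_{n} (R n n)² is the trace of the Hadamard product R ∘ R. -/

import Mathlib

open MeasureTheory ProbabilityTheory Matrix Complex Real ComplexOrder

/-- The positive semidefinite square root of a positive semidefinite matrix, as defined in the
older Mathlib (`Matrix.PosSemidef.sqrt`, since removed). -/
noncomputable def Matrix.PosSemidef.sqrt {n 𝕜 : Type*} [Fintype n] [DecidableEq n] [RCLike 𝕜]
    {A : Matrix n n 𝕜} (hA : A.PosSemidef) : Matrix n n 𝕜 :=
  hA.1.eigenvectorUnitary.1 * diagonal ((↑) ∘ Real.sqrt ∘ hA.1.eigenvalues) *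
    (star hA.1.eigenvectorUnitary : Matrix n n 𝕜)

private lemma sqrt_isHermitian {N : ℕ} {R : Matrix (Fin N) (Fin N) ℂ} (hR : R.PosSemidef) :
    hR.sqrt.IsHermitian := by
  unfold Matrix.PosSemidef.sqrt
  rw [show (star hR.1.eigenvectorUnitary : Matrix (Fin N) (Fin N) ℂ)
    = (hR.1.eigenvectorUnitary.1)ᴴ from rfl]
  exact isHermitian_mul_mul_conjTranspose _
    (isHermitian_diagonal_of_self_adjoint _ (by ext i; simp [Function.comp]))

private lemma sqrt_mul_self' {N : ℕ} {R : Matrix (Fin N) (Fin N) ℂ} (hR : R.PosSemidef) :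
    hR.sqrt * hR.sqrt = R := by
  unfold Matrix.PosSemidef.sqrt
  conv_rhs => rw [hR.1.spectral_theorem]
  rw [Unitary.conjStarAlgAut_apply]
  have hU : (star hR.1.eigenvectorUnitary : Matrix (Fin N) (Fin N) ℂ) * hR.1.eigenvectorUnitary.1 = 1 :=
    Unitary.star_mul_self_of_mem hR.1.eigenvectorUnitary.2
  simp only [Matrix.mul_assoc]
  rw [← Matrix.mul_assoc (star _ : Matrix (Fin N) (Fin N) ℂ) _ _, hU, Matrix.one_mul,
    ← Matrix.mul_assoc (diagonal _) (diagonal _), diagonal_mul_diagonal]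
  congr 3
  ext i
  simp only [Function.comp]
  rw [← RCLike.ofReal_mul, Real.mul_self_sqrt (hR.eigenvalues_nonneg i)]

private lemma memLp_star {Ω : Type*} [MeasurableSpace Ω] {μ : Measure Ω} {p : ENNReal}
    {f : Ω → ℂ} (hf : MemLp f p μ) : MemLp (fun ω => star (f ω)) p μ :=
  hf.of_le (continuous_star.comp_aestronglyMeasurable hf.1)
    (Filter.Eventually.of_forall fun ω => by simp)

private lemma integrable_mul_L2 {Ω : Type*} [MeasurableSpace Ω] {μ : Measure Ω}
    {f g : Ω → ℂ} (hf : MemLp f 2 μ) (hg : MemLp g 2 μ) :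
    Integrable (fun ω => f ω * g ω) μ := by
  have h := hg.smul (φ := f) hf (p := 2) (q := 2) (r := 1)
  rw [memLp_one_iff_integrable] at h
  exact h

private lemma integral_exp_unif : ∫ x : ℝ, Complex.exp (Complex.I * x)
    ∂((ENNReal.ofReal (2 * π))⁻¹ • (volume.restrict (Set.Ioo (-π) π))) = 0 := by
  rw [integral_smul_measure]
  have h0 : (volume : Measure ℝ).restrict (Set.Ioo (-π) π)
      = volume.restrict (Set.Ioc (-π) π) := Measure.restrict_congr_set Ioo_ae_eq_Ioc
  have h1 : ∫ x in Set.Ioo (-π) π, Complex.exp (Complex.I * x) = 0 := by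
    rw [h0, ← intervalIntegral.integral_of_le (by linarith [Real.pi_pos])]
    rw [integral_exp_mul_complex Complex.I_ne_zero]
    have : Complex.I * (π : ℂ) = (π : ℂ) * Complex.I := mul_comm _ _
    push_cast
    rw [mul_neg, this, Complex.exp_pi_mul_I, Complex.exp_neg, Complex.exp_pi_mul_I]
    norm_num
  rw [h1, smul_zero]

private noncomputable def Af {N : ℕ} (S : Matrix (Fin N) (Fin N) ℂ) (a b : ℝ) (n m : Fin N)
    (p : (Fin N → ℂ) × (Fin N → ℂ)) : ℂ :=
  ((a : ℂ) * S.mulVec p.1 n) * star ((b : ℂ) * S.mulVec p.2 m)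

private def Bf {N : ℕ} (n m : Fin N) (w : Fin N → ℂ) : ℂ := star (w n) * w m

private noncomputable def Cf {N : ℕ} (n m : Fin N) (t : Fin N → ℝ) : ℂ :=
  Complex.exp (Complex.I * t n) * star (Complex.exp (Complex.I * t m))

private lemma measurable_mulVec_apply {N : ℕ} (S : Matrix (Fin N) (Fin N) ℂ) (n : Fin N) :
    Measurable (fun v : Fin N → ℂ => S.mulVec v n) := by
  simp only [Matrix.mulVec, dotProduct]
  exact Finset.measurable_sum _ fun k _ => (measurable_pi_apply k).const_mul _

private lemma measurable_Af {N : ℕ} (S : Matrix (Fin N) (Fin N) ℂ) (a b : ℝ) (n m : Fin N) :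
    Measurable (Af S a b n m) := by
  unfold Af
  apply Measurable.mul
  · exact ((measurable_mulVec_apply S n).comp measurable_fst).const_mul _
  · exact (continuous_star.measurable).comp (((measurable_mulVec_apply S m).comp measurable_snd).const_mul _)

private lemma measurable_Bf {N : ℕ} (n m : Fin N) : Measurable (Bf n m) := by
  unfold Bf; fun_prop

private lemma measurable_Cf {N : ℕ} (n m : Fin N) : Measurable (Cf n m) := by
  unfold Cf
  have e : ∀ (k : Fin N), Measurable (fun t : Fin N → ℝ => Complex.exp (Complex.I * t k)) :=
    fun k => Complex.measurable_exp.comp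
      ((Complex.measurable_ofReal.comp (measurable_pi_apply k)).const_mul Complex.I)
  exact (e n).mul ((continuous_star.measurable).comp (e m))

private lemma norm_Cf_le {N : ℕ} (n m : Fin N) (t : Fin N → ℝ) : ‖Cf n m t‖ ≤ 1 := by
  unfold Cf
  have h : ∀ x : ℝ, ‖Complex.exp (Complex.I * x)‖ = 1 := fun x => by
    simp [Complex.norm_exp]
  rw [norm_mul, norm_star, h, h, mul_one]

/-- **Eavesdropper cross-correlation under random phase shifts**: the identity
`η_{aebe} = ρ_ab √κ₁ √κ₂ κ_e · tr (R ∘ R)`, where the Hadamard trace is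
`∑ n, (R n n)²`. -/
theorem eavesdropper_crossCorrelation_RPS
    {Ω : Type*} [MeasurableSpace Ω] (μ : Measure Ω) [IsProbabilityMeasure μ]
    {N : ℕ} (hN : 1 ≤ N)
    (R : Matrix (Fin N) (Fin N) ℂ) (hR : R.PosSemidef)
    (κ₁ κ₂ κe ρ : ℝ) (hκ₁ : 0 ≤ κ₁) (hκ₂ : 0 ≤ κ₂) (hκe : 0 ≤ κe)
    (g₁ g₂ he : Ω → Fin N → ℂ)
    (φ : Fin N → Ω → ℝ)
    (h₁ h₂ : Ω → Fin N → ℂ)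
    (hh₁ : ∀ ω, h₁ ω = (Real.sqrt κ₁ : ℂ) • (hR.sqrt.mulVec (g₁ ω)))
    (hh₂ : ∀ ω, h₂ ω = (Real.sqrt κ₂ : ℂ) • (hR.sqrt.mulVec (g₂ ω)))
    -- measurability
    (hg₁m : Measurable g₁) (hg₂m : Measurable g₂) (hhem : Measurable he)
    (hφm : ∀ n, Measurable (φ n))
    -- square integrability and zero means
    (hg₁L2 : ∀ i, MemLp (fun ω => g₁ ω i) 2 μ)
    (hg₂L2 : ∀ i, MemLp (fun ω => g₂ ω i) 2 μ)
    (hheL2 : ∀ i, MemLp (fun ω => he ω i) 2 μ)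
    (hg₁mean : ∀ i, ∫ ω, g₁ ω i ∂μ = 0)
    (hg₂mean : ∀ i, ∫ ω, g₂ ω i ∂μ = 0)
    (hhemean : ∀ i, ∫ ω, he ω i ∂μ = 0)
    -- cross covariance of g₁ and g₂, and covariance of h_e
    (hgcov : ∀ i j, ∫ ω, g₁ ω i * star (g₂ ω j) ∂μ = if i = j then (ρ : ℂ) else 0)
    (hhecov : ∀ i j, ∫ ω, he ω i * star (he ω j) ∂μ = (κe : ℂ) * R i j)
    -- the phases are mutually independent and uniform on (-π, π)
    (hφindep : iIndepFun φ μ)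
    (hφunif : ∀ n, μ.map (φ n)
        = (ENNReal.ofReal (2 * π))⁻¹ • (volume.restrict (Set.Ioo (-π) π)))
    -- the pair (g₁, g₂), the vector h_e and the phase family are mutually
    -- independent: joint law = product of laws
    (hindep : μ.map (fun ω => ((g₁ ω, g₂ ω), he ω, fun n : Fin N => φ n ω)) =
        (μ.map (fun ω => (g₁ ω, g₂ ω))).prod
          ((μ.map he).prod (μ.map (fun ω (n : Fin N) => φ n ω)))) :
    ∫ ω, (star (he ω) ⬝ᵥ
            ((Matrix.diagonal fun n => Complex.exp (Complex.I * (φ n ω : ℂ))).mulVec (h₁ ω)))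
          * star (star (he ω) ⬝ᵥ
            ((Matrix.diagonal fun n => Complex.exp (Complex.I * (φ n ω : ℂ))).mulVec (h₂ ω))) ∂μ
      = ((ρ * Real.sqrt κ₁ * Real.sqrt κ₂ * κe : ℝ) : ℂ) * ∑ n, (R n n) ^ 2 := by
  classical
  set S : Matrix (Fin N) (Fin N) ℂ := hR.sqrt with hSdef
  set ν₁ : Measure ((Fin N → ℂ) × (Fin N → ℂ)) := μ.map (fun ω => (g₁ ω, g₂ ω)) with hν₁
  set ν₂ : Measure (Fin N → ℂ) := μ.map he with hν₂
  set ν₃ : Measure (Fin N → ℝ) := μ.map (fun ω (n : Fin N) => φ n ω) with hν₃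
  have hφvm : Measurable (fun ω (n : Fin N) => φ n ω) := measurable_pi_lambda _ fun n => hφm n
  have hgm : Measurable (fun ω => (g₁ ω, g₂ ω)) := hg₁m.prodMk hg₂m
  haveI hp1 : IsProbabilityMeasure ν₁ := Measure.isProbabilityMeasure_map hgm.aemeasurable
  haveI hp2 : IsProbabilityMeasure ν₂ := Measure.isProbabilityMeasure_map hhem.aemeasurable
  haveI hp3 : IsProbabilityMeasure ν₃ := Measure.isProbabilityMeasure_map hφvm.aemeasurable
  set F : ((Fin N → ℂ) × (Fin N → ℂ)) × ((Fin N → ℂ) × (Fin N → ℝ)) → ℂ :=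
    fun z => ∑ n, ∑ m,
      Af S (Real.sqrt κ₁) (Real.sqrt κ₂) n m z.1 * (Bf n m z.2.1 * Cf n m z.2.2) with hF
  have hFm : Measurable F := by
    apply Finset.measurable_sum; intro n _; apply Finset.measurable_sum; intro m _
    exact ((measurable_Af S _ _ n m).comp measurable_fst).mul
      ((((measurable_Bf n m).comp measurable_fst).comp measurable_snd).mul
        (((measurable_Cf n m).comp measurable_snd).comp measurable_snd))
  -- pointwise identity
  have key : ∀ ω, (star (he ω) ⬝ᵥ
            ((Matrix.diagonal fun n => Complex.exp (Complex.I * (φ n ω : ℂ))).mulVec (h₁ ω)))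
          * star (star (he ω) ⬝ᵥ
            ((Matrix.diagonal fun n => Complex.exp (Complex.I * (φ n ω : ℂ))).mulVec (h₂ ω)))
      = F ((g₁ ω, g₂ ω), he ω, fun n : Fin N => φ n ω) := by
    intro ω
    simp only [hF, Af, Bf, Cf, dotProduct, Matrix.mulVec_diagonal, hh₁ ω, hh₂ ω,
      Pi.smul_apply, smul_eq_mul, star_sum, Finset.sum_mul_sum]
    refine Finset.sum_congr rfl fun n _ => Finset.sum_congr rfl fun m _ => ?_
    simp only [Pi.star_apply, StarMul.star_mul, star_star, RCLike.star_def, _root_.map_mul,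
      Complex.conj_conj, Complex.conj_ofReal]
    ring
  -- transfer to the product measure
  have step1 : ∫ ω, (star (he ω) ⬝ᵥ
            ((Matrix.diagonal fun n => Complex.exp (Complex.I * (φ n ω : ℂ))).mulVec (h₁ ω)))
          * star (star (he ω) ⬝ᵥ
            ((Matrix.diagonal fun n => Complex.exp (Complex.I * (φ n ω : ℂ))).mulVec (h₂ ω))) ∂μ
      = ∫ z, F z ∂(ν₁.prod (ν₂.prod ν₃)) := by
    rw [hν₁, hν₂, hν₃, ← hindep,
      integral_map (hgm.prodMk (hhem.prodMk hφvm)).aemeasurable hFm.aestronglyMeasurable]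
    exact integral_congr_ae (Filter.Eventually.of_forall fun ω => key ω)
  rw [step1]
  -- integrability of each term
  have hAint : ∀ n m : Fin N, Integrable (Af S (Real.sqrt κ₁) (Real.sqrt κ₂) n m) ν₁ := by
    intro n m
    rw [hν₁, integrable_map_measure (measurable_Af S _ _ n m).aestronglyMeasurable
      hgm.aemeasurable]
    have h1 : MemLp (fun ω => (Real.sqrt κ₁ : ℂ) * S.mulVec (g₁ ω) n) 2 μ := by
      refine MemLp.const_mul ?_ _
      simp only [Matrix.mulVec, dotProduct]
      exact memLp_finset_sum _ fun k _ => (hg₁L2 k).const_mul _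
    have h2 : MemLp (fun ω => star ((Real.sqrt κ₂ : ℂ) * S.mulVec (g₂ ω) m)) 2 μ := by
      refine memLp_star ?_
      refine MemLp.const_mul ?_ _
      simp only [Matrix.mulVec, dotProduct]
      exact memLp_finset_sum _ fun k _ => (hg₂L2 k).const_mul _
    exact integrable_mul_L2 h1 h2
  have hBint : ∀ n m : Fin N, Integrable (Bf n m) ν₂ := by
    intro n m
    rw [hν₂, integrable_map_measure (measurable_Bf n m).aestronglyMeasurable hhem.aemeasurable]
    exact integrable_mul_L2 (memLp_star (hheL2 n)) (hheL2 m)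
  have hCint : ∀ n m : Fin N, Integrable (Cf n m) ν₃ :=
    fun n m => (memLp_top_of_bound (measurable_Cf n m).aestronglyMeasurable 1
      (Filter.Eventually.of_forall (norm_Cf_le n m))).integrable le_top
  have hterm : ∀ n m : Fin N, Integrable (fun z :
      ((Fin N → ℂ) × (Fin N → ℂ)) × ((Fin N → ℂ) × (Fin N → ℝ)) =>
      Af S (Real.sqrt κ₁) (Real.sqrt κ₂) n m z.1 * (Bf n m z.2.1 * Cf n m z.2.2))
      (ν₁.prod (ν₂.prod ν₃)) :=
    fun n m => (hAint n m).mul_prod ((hBint n m).mul_prod (hCint n m))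
  -- swap sum and integral
  rw [hF]
  rw [integral_finset_sum _ (fun n _ => integrable_finset_sum _ fun m _ => hterm n m)]
  have hswap : ∀ n : Fin N, ∫ z, ∑ m,
      Af S (Real.sqrt κ₁) (Real.sqrt κ₂) n m z.1 * (Bf n m z.2.1 * Cf n m z.2.2)
        ∂(ν₁.prod (ν₂.prod ν₃))
      = ∑ m, ∫ z, Af S (Real.sqrt κ₁) (Real.sqrt κ₂) n m z.1 *
          (Bf n m z.2.1 * Cf n m z.2.2) ∂(ν₁.prod (ν₂.prod ν₃)) :=
    fun n => integral_finset_sum _ fun m _ => hterm n m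
  simp only [hswap]
  -- factor each term
  have hfactor : ∀ n m : Fin N, ∫ z, Af S (Real.sqrt κ₁) (Real.sqrt κ₂) n m z.1 *
      (Bf n m z.2.1 * Cf n m z.2.2) ∂(ν₁.prod (ν₂.prod ν₃))
      = (∫ p, Af S (Real.sqrt κ₁) (Real.sqrt κ₂) n m p ∂ν₁) *
        ((∫ w, Bf n m w ∂ν₂) * (∫ t, Cf n m t ∂ν₃)) := by
    intro n m
    refine (integral_prod_mul (f := Af S (Real.sqrt κ₁) (Real.sqrt κ₂) n m)
      (g := fun y : (Fin N → ℂ) × (Fin N → ℝ) => Bf n m y.1 * Cf n m y.2)).trans ?_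
    rw [integral_prod_mul]
  simp only [hfactor]
  -- the matrix identity
  have hSR : ∀ n m : Fin N, (∑ p, S n p * star (S m p)) = R n m := by
    intro n m
    have hsym : ∀ p, star (S m p) = S p m := fun p => (sqrt_isHermitian hR).apply p m
    calc (∑ p, S n p * star (S m p)) = ∑ p, S n p * S p m :=
          Finset.sum_congr rfl fun p _ => by rw [hsym p]
      _ = (S * S) n m := (Matrix.mul_apply).symm
      _ = R n m := by rw [hSdef, sqrt_mul_self' hR]
  -- value of the A integral
  have IA : ∀ n m : Fin N, ∫ p, Af S (Real.sqrt κ₁) (Real.sqrt κ₂) n m p ∂ν₁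
      = ((Real.sqrt κ₁ : ℂ) * (Real.sqrt κ₂ : ℂ)) * ((ρ : ℂ) * R n m) := by
    intro n m
    rw [hν₁, integral_map hgm.aemeasurable (measurable_Af S _ _ n m).aestronglyMeasurable]
    have hexp : ∀ ω, Af S (Real.sqrt κ₁) (Real.sqrt κ₂) n m (g₁ ω, g₂ ω)
        = ∑ p, ∑ q, ((Real.sqrt κ₁ : ℂ) * (Real.sqrt κ₂ : ℂ) * (S n p * star (S m q)))
            * (g₁ ω p * star (g₂ ω q)) := by
      intro ω
      have e1 : Af S (Real.sqrt κ₁) (Real.sqrt κ₂) n m (g₁ ω, g₂ ω)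
          = (∑ p, (Real.sqrt κ₁ : ℂ) * (S n p * g₁ ω p))
            * star (∑ q, (Real.sqrt κ₂ : ℂ) * (S m q * g₂ ω q)) := by
        simp [Af, Matrix.mulVec, dotProduct, Finset.mul_sum]
      rw [e1, star_sum, Finset.sum_mul_sum]
      refine Finset.sum_congr rfl fun p _ => Finset.sum_congr rfl fun q _ => ?_
      simp only [StarMul.star_mul, star_star, RCLike.star_def, _root_.map_mul,
        Complex.conj_conj, Complex.conj_ofReal]
      ring
    simp only [hexp]
    rw [integral_finset_sum _ (fun p _ => integrable_finset_sum _ fun q _ =>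
      (integrable_mul_L2 (hg₁L2 p) (memLp_star (hg₂L2 q))).const_mul _)]
    have : ∀ p : Fin N, ∫ ω, ∑ q, ((Real.sqrt κ₁ : ℂ) * (Real.sqrt κ₂ : ℂ)
          * (S n p * star (S m q))) * (g₁ ω p * star (g₂ ω q)) ∂μ
        = ∑ q, ((Real.sqrt κ₁ : ℂ) * (Real.sqrt κ₂ : ℂ) * (S n p * star (S m q)))
            * (if p = q then (ρ : ℂ) else 0) := by
      intro p
      rw [integral_finset_sum _ (fun q _ =>
        (integrable_mul_L2 (hg₁L2 p) (memLp_star (hg₂L2 q))).const_mul _)]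
      refine Finset.sum_congr rfl fun q _ => ?_
      rw [integral_const_mul, hgcov p q]
    simp only [this, mul_ite, mul_zero, Finset.sum_ite_eq, Finset.mem_univ, if_true]
    rw [← Finset.sum_mul]
    rw [show (∑ p, (Real.sqrt κ₁ : ℂ) * (Real.sqrt κ₂ : ℂ) * (S n p * star (S m p)))
        = (Real.sqrt κ₁ : ℂ) * (Real.sqrt κ₂ : ℂ) * R n m by
      rw [← Finset.mul_sum, hSR n m]]
    ring
  -- value of the B integral
  have IB : ∀ n m : Fin N, ∫ w, Bf n m w ∂ν₂ = (κe : ℂ) * star (R n m) := by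
    intro n m
    rw [hν₂, integral_map hhem.aemeasurable (measurable_Bf n m).aestronglyMeasurable]
    have hbw : ∀ ω, Bf n m (he ω) = (starRingEnd ℂ) (he ω n * star (he ω m)) := by
      intro ω
      simp only [Bf, RCLike.star_def, _root_.map_mul, Complex.conj_conj]
    simp only [hbw]
    rw [integral_conj]
    have hc := hhecov n m
    rw [hc, _root_.map_mul, Complex.conj_ofReal, RCLike.star_def]
  -- value of the C integral
  have IC : ∀ n m : Fin N, ∫ t, Cf n m t ∂ν₃ = if n = m then (1 : ℂ) else 0 := by
    intro n m
    by_cases hnm : n = m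
    · subst hnm
      have h1 : ∀ t : Fin N → ℝ, Cf n n t = 1 := by
        intro t
        rw [Cf, RCLike.star_def, ← Complex.exp_conj, _root_.map_mul, Complex.conj_I,
          Complex.conj_ofReal, ← Complex.exp_add]
        simp
      simp only [h1, if_pos rfl]
      simp
    · rw [if_neg hnm]
      have hpair : μ.map (fun ω => (φ n ω, φ m ω)) = (μ.map (φ n)).prod (μ.map (φ m)) :=
        (indepFun_iff_map_prod_eq_prod_map_map (hφm n).aemeasurable
          (hφm m).aemeasurable).mp (hφindep.indepFun hnm)
      have e : ∀ pr : (ℝ × ℝ) → ℝ, Measurable pr →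
          Measurable (fun x : ℝ × ℝ => Complex.exp (Complex.I * pr x)) := fun pr h =>
        Complex.measurable_exp.comp ((Complex.measurable_ofReal.comp h).const_mul _)
      have hDm : Measurable (fun x : ℝ × ℝ =>
          Complex.exp (Complex.I * x.1) * star (Complex.exp (Complex.I * x.2))) :=
        (e _ measurable_fst).mul ((continuous_star.measurable).comp (e _ measurable_snd))
      calc ∫ t, Cf n m t ∂ν₃
          = ∫ ω, Cf n m (fun k => φ k ω) ∂μ := by
            rw [hν₃]
            exact integral_map hφvm.aemeasurable (measurable_Cf n m).aestronglyMeasurable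
        _ = ∫ x : ℝ × ℝ, Complex.exp (Complex.I * x.1) * star (Complex.exp (Complex.I * x.2))
              ∂(μ.map fun ω => (φ n ω, φ m ω)) :=
            (integral_map ((hφm n).prodMk (hφm m)).aemeasurable
              hDm.aestronglyMeasurable).symm
        _ = (∫ x : ℝ, Complex.exp (Complex.I * x) ∂(μ.map (φ n))) *
              ∫ x : ℝ, star (Complex.exp (Complex.I * x)) ∂(μ.map (φ m)) := by
            rw [hpair]
            exact integral_prod_mul (fun x : ℝ => Complex.exp (Complex.I * x))
              (fun x : ℝ => star (Complex.exp (Complex.I * x)))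
        _ = 0 := by rw [hφunif n, integral_exp_unif, zero_mul]
  simp only [IA, IB, IC, mul_ite, mul_one, mul_zero, Finset.sum_ite_eq, Finset.mem_univ,
    if_true]
  rw [Finset.mul_sum]
  refine Finset.sum_congr rfl fun n _ => ?_
  rw [hR.1.apply n n]
  push_cast
  ring
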